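/- There exists a compact set K ⊆ [0,1] of positive Lebesgue measure such that for every μ > 0, the function f : ℝ → ℝ defined by f(x) = inf_{t ∈ K} μ^{−1/3}·((x − t)²)^{1/3} satisfies: (i) f is nonnegative and Hölder continuous with exponent 2/3, namely |f(x) − f(y)| ≤ μ^{−1/3}·|x − y|^{2/3} for all x, y ∈ ℝ; (ii) the set W_μ = {(x, y) ∈ ℝ² : ∃ t ∈ K, (x − t)² ≤ μ·y³} equals the upper graph {(x, y) ∈ ℝ² : y ≥ f(x)}; and (iii) f does not have locally bounded variation on ℝ (¬ LocallyBoundedVariationOn f univ). -/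

import Mathlib

open MeasureTheory Set

noncomputable section FatCantorConstruction
namespace FatCantorNonBV

/-! ### The fat Cantor-like set -/

def q (n : ℕ) : ℝ := 1 / Real.sqrt (n + 1)
def dd (n : ℕ) : ℝ := q n - q (n + 1)
def aa (n : ℕ) : ℝ := q (n + 1) + dd n / 4
def bb (n : ℕ) : ℝ := q (n + 1) + 3 * dd n / 4
def mm (n : ℕ) : ℝ := q (n + 1) + dd n / 2
def KK : Set ℝ := Icc 0 1 \ ⋃ n, Ioo (aa n) (bb n)

lemma sqrt_pos' (n : ℕ) : 0 < Real.sqrt (n + 1) := Real.sqrt_pos.2 (by positivity)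

lemma q_pos (n : ℕ) : 0 < q n := by unfold q; positivity

lemma q_strict_anti {m n : ℕ} (h : m < n) : q n < q m := by
  unfold q
  apply div_lt_div_of_pos_left one_pos (sqrt_pos' m)
  apply Real.sqrt_lt_sqrt (by positivity)
  have : (m : ℝ) < n := by exact_mod_cast h
  linarith

lemma q_anti {m n : ℕ} (h : m ≤ n) : q n ≤ q m := by
  rcases eq_or_lt_of_le h with rfl | h
  · exact le_rfl
  · exact (q_strict_anti h).le

lemma q_le_one (n : ℕ) : q n ≤ 1 := by
  unfold q
  rw [div_le_one (sqrt_pos' n)]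
  exact Real.one_le_sqrt.2 (by linarith [Nat.cast_nonneg (α := ℝ) n])

lemma q_zero : q 0 = 1 := by simp [q]

lemma dd_pos (n : ℕ) : 0 < dd n := sub_pos.2 (q_strict_anti (Nat.lt_succ_self n))

lemma aa_lt_bb (n : ℕ) : aa n < bb n := by unfold aa bb; linarith [dd_pos n]
lemma q_lt_aa (n : ℕ) : q (n + 1) < aa n := by unfold aa; linarith [dd_pos n]
lemma bb_lt_q (n : ℕ) : bb n < q n := by
  unfold bb; have := dd_pos n; unfold dd at *; linarith
lemma aa_lt_mm (n : ℕ) : aa n < mm n := by unfold aa mm; linarith [dd_pos n]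
lemma mm_lt_bb (n : ℕ) : mm n < bb n := by unfold mm bb; linarith [dd_pos n]

lemma interval_mem_K {x : ℝ} {n : ℕ} (h1 : q (n + 1) ≤ x) (h2 : x ≤ q n)
    (hn : ∀ m, m = n → x ∉ Ioo (aa m) (bb m)) : x ∈ KK := by
  constructor
  · exact ⟨le_trans (q_pos (n + 1)).le h1, le_trans h2 (q_le_one n)⟩
  · intro hx
    simp only [mem_iUnion] at hx
    obtain ⟨m, hm⟩ := hx
    rcases lt_trichotomy m n with h | h | h
    · have h3 : q (m + 1) < x := lt_trans (q_lt_aa m) hm.1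
      have h4 : q n ≤ q (m + 1) := q_anti h
      linarith
    · exact hn m h hm
    · have h3 : x < q m := lt_trans hm.2 (bb_lt_q m)
      have h4 : q m ≤ q (n + 1) := q_anti h
      linarith

lemma aa_mem_K (n : ℕ) : aa n ∈ KK := by
  refine interval_mem_K (q_lt_aa n).le
    (le_trans (aa_lt_bb n).le (bb_lt_q n).le) ?_
  rintro m rfl hm
  exact lt_irrefl _ hm.1

lemma bb_mem_K (n : ℕ) : bb n ∈ KK := by
  refine interval_mem_K (le_trans (q_lt_aa n).le (aa_lt_bb n).le) (bb_lt_q n).le ?_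
  rintro m rfl hm
  exact lt_irrefl _ hm.2

lemma K_compact : IsCompact KK :=
  isCompact_Icc.of_isClosed_subset
    (isClosed_Icc.sdiff (isOpen_iUnion fun _ => isOpen_Ioo)) diff_subset

lemma K_subset : KK ⊆ Icc 0 1 := diff_subset

lemma zero_mem_K : (0 : ℝ) ∈ KK := by
  constructor
  · exact ⟨le_rfl, zero_le_one⟩
  · intro hx
    simp only [mem_iUnion] at hx
    obtain ⟨m, hm⟩ := hx
    have : 0 < aa m := lt_trans (q_pos (m + 1)) (q_lt_aa m)
    exact absurd hm.1 (by linarith)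

lemma K_nonempty : KK.Nonempty := ⟨0, zero_mem_K⟩

lemma sum_dd (N : ℕ) : ∑ n ∈ Finset.range N, dd n = 1 - q N := by
  have h := Finset.sum_range_sub' q N
  unfold dd
  rw [h, q_zero]

lemma vol_union_le : volume (⋃ n, Ioo (aa n) (bb n)) ≤ ENNReal.ofReal (1 / 2) := by
  refine le_trans (measure_iUnion_le _) ?_
  have hlen : ∀ n, volume (Ioo (aa n) (bb n)) = ENNReal.ofReal (dd n / 2) := by
    intro n
    rw [Real.volume_Ioo]
    congr 1
    unfold aa bb; ring
  calc ∑' n, volume (Ioo (aa n) (bb n)) = ∑' n, ENNReal.ofReal (dd n / 2) := by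
        simp_rw [hlen]
    _ ≤ ENNReal.ofReal (1 / 2) := by
        refine ENNReal.tsum_le_of_sum_range_le ?_
        intro N
        rw [← ENNReal.ofReal_sum_of_nonneg (fun i _ => by linarith [dd_pos i])]
        apply ENNReal.ofReal_le_ofReal
        have h : ∑ n ∈ Finset.range N, dd n / 2 = (1 - q N) / 2 := by
          rw [← Finset.sum_div, sum_dd]
        rw [h]
        have := q_pos N
        linarith

lemma K_vol_pos : 0 < volume KK := by
  by_contra h
  push_neg at h
  have h0 : volume KK = 0 := le_antisymm h zero_le
  have hsub : Icc (0:ℝ) 1 ⊆ KK ∪ ⋃ n, Ioo (aa n) (bb n) := fun x hx => by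
    by_cases hmem : x ∈ ⋃ n, Ioo (aa n) (bb n)
    · exact Or.inr hmem
    · exact Or.inl ⟨hx, hmem⟩
  have h1vol : (1 : ENNReal) = volume (Icc (0:ℝ) 1) := by
    simp [Real.volume_Icc]
  have := calc (1 : ENNReal) = volume (Icc (0:ℝ) 1) := h1vol
    _ ≤ volume (KK ∪ ⋃ n, Ioo (aa n) (bb n)) := measure_mono hsub
    _ ≤ volume KK + volume (⋃ n, Ioo (aa n) (bb n)) := measure_union_le _ _
    _ ≤ 0 + ENNReal.ofReal (1 / 2) := add_le_add h0.le vol_union_le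
    _ = ENNReal.ofReal (1 / 2) := zero_add _
  rw [(ENNReal.ofReal_one).symm] at this
  have := (ENNReal.ofReal_le_ofReal_iff (by norm_num)).mp this
  linarith

/-! ### quantitative lower bound on gap lengths -/

lemma dd_ge (n : ℕ) : 1 / (2 * Real.sqrt ((n : ℝ) + 2) ^ 3) ≤ dd n := by
  set s := Real.sqrt ((n : ℝ) + 1) with hs_def
  set t := Real.sqrt ((n : ℝ) + 2) with ht_def
  have hs : 0 < s := Real.sqrt_pos.2 (by positivity)
  have ht : 0 < t := Real.sqrt_pos.2 (by positivity)
  have hst : s ≤ t := Real.sqrt_le_sqrt (by linarith)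
  have hsq : s ^ 2 = (n : ℝ) + 1 := Real.sq_sqrt (by positivity)
  have htq : t ^ 2 = (n : ℝ) + 2 := Real.sq_sqrt (by positivity)
  have hdd : dd n = 1 / s - 1 / t := by
    unfold dd q
    push_cast
    rw [show (n : ℝ) + 1 + 1 = (n : ℝ) + 2 from by ring, hs_def, ht_def]
  rw [hdd, div_sub_div _ _ hs.ne' ht.ne', div_le_div_iff₀ (by positivity) (by positivity)]
  have h1 : (t - s) * (t + s) = 1 := by nlinarith [hsq, htq]
  have cert : 0 ≤ t * ((t - s) * (2 * t + s)) :=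
    mul_nonneg ht.le (mul_nonneg (by linarith) (by linarith))
  nlinarith [cert, h1, hs, ht, mul_pos hs ht]

lemma dd4_rpow_ge (n : ℕ) : 1 / (4 * ((n : ℝ) + 2)) ≤ (dd n / 4) ^ ((2:ℝ)/3) := by
  set t := Real.sqrt ((n : ℝ) + 2) with ht_def
  have ht : 0 < t := Real.sqrt_pos.2 (by positivity)
  have htq : t ^ 2 = (n : ℝ) + 2 := Real.sq_sqrt (by positivity)
  have h4 : 4 * ((n : ℝ) + 2) = (2 * t) ^ 2 := by rw [mul_pow]; rw [htq]; ring
  have e : (1 / (4 * ((n : ℝ) + 2))) ^ ((3:ℝ)/2) = 1 / (8 * t ^ 3) := by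
    rw [h4, one_div, ← Real.rpow_natCast (2 * t) 2,
      Real.inv_rpow (Real.rpow_nonneg (by positivity) _),
      ← Real.rpow_mul (by positivity)]
    rw [show ((2:ℕ):ℝ) * ((3:ℝ)/2) = ((3:ℕ):ℝ) from by norm_num, Real.rpow_natCast,
      one_div]
    congr 1
    ring
  have key : (1 / (4 * ((n : ℝ) + 2))) ^ ((3:ℝ)/2) ≤ dd n / 4 := by
    rw [e]
    have h := dd_ge n
    rw [← ht_def] at h
    rw [div_le_iff₀ (by positivity : (0:ℝ) < 2 * t ^ 3)] at h
    rw [div_le_iff₀ (by positivity : (0:ℝ) < 8 * t ^ 3)]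
    nlinarith [h]
  calc 1 / (4 * ((n : ℝ) + 2))
      = ((1 / (4 * ((n : ℝ) + 2))) ^ ((3:ℝ)/2)) ^ ((2:ℝ)/3) := by
        rw [← Real.rpow_mul (by positivity)]
        norm_num
    _ ≤ (dd n / 4) ^ ((2:ℝ)/3) :=
        Real.rpow_le_rpow (Real.rpow_nonneg (by positivity) _) key (by norm_num)

/-! ### generic facts about the infimum function -/

lemma cuberoot_sq (u : ℝ) : ((u ^ 2 : ℝ)) ^ ((1:ℝ)/3) = |u| ^ ((2:ℝ)/3) := by
  rw [← sq_abs, ← Real.rpow_natCast |u| 2, ← Real.rpow_mul (abs_nonneg u)]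
  norm_num

lemma rpow23_subadd {a b : ℝ} (ha : 0 ≤ a) (hb : 0 ≤ b) :
    (a + b) ^ ((2:ℝ)/3) ≤ a ^ ((2:ℝ)/3) + b ^ ((2:ℝ)/3) := by
  have h := NNReal.rpow_add_le_add_rpow a.toNNReal b.toNNReal
    (by norm_num : (0:ℝ) ≤ 2/3) (by norm_num : (2:ℝ)/3 ≤ 1)
  have h2 := NNReal.coe_le_coe.2 h
  push_cast [NNReal.coe_rpow, Real.coe_toNNReal a ha, Real.coe_toNNReal b hb] at h2
  convert h2 using 2

section Generic

variable {K : Set ℝ} (hK : IsCompact K) (hne : K.Nonempty) {c : ℝ} (hc : 0 < c)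

include hc in
lemma bdd (x : ℝ) : BddBelow (range fun t : K => c * ((x - (t:ℝ)) ^ 2) ^ ((1:ℝ)/3)) := by
  refine ⟨0, ?_⟩
  rintro _ ⟨t, rfl⟩
  have : (0:ℝ) ≤ ((x - (t:ℝ)) ^ 2) ^ ((1:ℝ)/3) := Real.rpow_nonneg (by positivity) _
  exact mul_nonneg hc.le this

include hne hc in
lemma F_le (x : ℝ) {t : ℝ} (ht : t ∈ K) :
    (⨅ s : K, c * ((x - (s:ℝ)) ^ 2) ^ ((1:ℝ)/3)) ≤ c * |x - t| ^ ((2:ℝ)/3) := by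
  have := ciInf_le (bdd hc x) (⟨t, ht⟩ : K)
  rwa [cuberoot_sq] at this

include hne hc in
lemma F_ge (x : ℝ) {r : ℝ} (hr : 0 ≤ r) (h : ∀ t ∈ K, r ≤ |x - t|) :
    c * r ^ ((2:ℝ)/3) ≤ ⨅ s : K, c * ((x - (s:ℝ)) ^ 2) ^ ((1:ℝ)/3) := by
  haveI : Nonempty K := hne.to_subtype
  refine le_ciInf fun t => ?_
  rw [cuberoot_sq]
  exact mul_le_mul_of_nonneg_left
    (Real.rpow_le_rpow hr (h t t.2) (by norm_num)) hc.le

include hK hne hc in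
lemma F_min (x : ℝ) : ∃ t₀ ∈ K, (∀ t ∈ K, |x - t₀| ≤ |x - t|) ∧
    (⨅ s : K, c * ((x - (s:ℝ)) ^ 2) ^ ((1:ℝ)/3)) = c * |x - t₀| ^ ((2:ℝ)/3) := by
  obtain ⟨t₀, ht₀, hmin⟩ := hK.exists_isMinOn hne
    (continuousOn_const.sub continuousOn_id).abs.neg.neg
  simp only [neg_neg] at hmin
  have hmin' : ∀ t ∈ K, |x - t₀| ≤ |x - t| := fun t ht => hmin ht
  refine ⟨t₀, ht₀, hmin', le_antisymm (F_le hne hc x ht₀) ?_⟩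
  exact F_ge hne hc x (abs_nonneg _) hmin'

include hc in
lemma F_nonneg (x : ℝ) : 0 ≤ ⨅ s : K, c * ((x - (s:ℝ)) ^ 2) ^ ((1:ℝ)/3) :=
  Real.iInf_nonneg fun t => mul_nonneg hc.le (Real.rpow_nonneg (by positivity) _)

include hK hne hc in
lemma F_sub_le (x y : ℝ) :
    (⨅ s : K, c * ((x - (s:ℝ)) ^ 2) ^ ((1:ℝ)/3))
      - (⨅ s : K, c * ((y - (s:ℝ)) ^ 2) ^ ((1:ℝ)/3)) ≤ c * |x - y| ^ ((2:ℝ)/3) := by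
  obtain ⟨t₀, ht₀, _, hFy⟩ := F_min hK hne hc y
  rw [hFy, sub_le_iff_le_add]
  calc (⨅ s : K, c * ((x - (s:ℝ)) ^ 2) ^ ((1:ℝ)/3)) ≤ c * |x - t₀| ^ ((2:ℝ)/3) :=
        F_le hne hc x ht₀
    _ ≤ c * (|x - y| + |y - t₀|) ^ ((2:ℝ)/3) := by
        apply mul_le_mul_of_nonneg_left _ hc.le
        apply Real.rpow_le_rpow (abs_nonneg _) _ (by norm_num)
        calc |x - t₀| = |(x - y) + (y - t₀)| := by ring_nf
          _ ≤ |x - y| + |y - t₀| := abs_add_le _ _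
    _ ≤ c * (|x - y| ^ ((2:ℝ)/3) + |y - t₀| ^ ((2:ℝ)/3)) := by
        apply mul_le_mul_of_nonneg_left
          (rpow23_subadd (abs_nonneg _) (abs_nonneg _)) hc.le
    _ = c * |x - y| ^ ((2:ℝ)/3) + c * |y - t₀| ^ ((2:ℝ)/3) := by ring

include hK hne hc in
lemma F_holder (x y : ℝ) :
    |(⨅ s : K, c * ((x - (s:ℝ)) ^ 2) ^ ((1:ℝ)/3))
      - (⨅ s : K, c * ((y - (s:ℝ)) ^ 2) ^ ((1:ℝ)/3))| ≤ c * |x - y| ^ ((2:ℝ)/3) := by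
  rw [abs_sub_le_iff]
  refine ⟨F_sub_le hK hne hc x y, ?_⟩
  have := F_sub_le hK hne hc y x
  rwa [abs_sub_comm] at this

variable {μ : ℝ} (hμ : 0 < μ)

include hμ in
lemma cpos : (0:ℝ) < μ ^ (-(1:ℝ)/3) := Real.rpow_pos_of_pos hμ _

include hne hμ in
lemma graph_forward {x y t : ℝ} (ht : t ∈ K) (h : (x - t) ^ 2 ≤ μ * y ^ 3) :
    (⨅ s : K, μ ^ (-(1:ℝ)/3) * ((x - (s:ℝ)) ^ 2) ^ ((1:ℝ)/3)) ≤ y := by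
  have hy : 0 ≤ y := by
    have h0 : (0:ℝ) ≤ μ * y ^ 3 := le_trans (by positivity) h
    have h1 : (0:ℝ) ≤ y ^ 3 := nonneg_of_mul_nonneg_right h0 hμ
    exact (Odd.pow_nonneg_iff (by decide : Odd 3)).mp h1
  have hle := F_le hne (cpos hμ) x ht
  refine le_trans hle ?_
  have h1 : |x - t| ^ ((2:ℝ)/3) ≤ (μ * y ^ 3) ^ ((1:ℝ)/3) := by
    rw [← cuberoot_sq]
    exact Real.rpow_le_rpow (by positivity) h (by norm_num)
  have h2 : (μ * y ^ 3) ^ ((1:ℝ)/3) = μ ^ ((1:ℝ)/3) * y := by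
    rw [Real.mul_rpow hμ.le (by positivity), ← Real.rpow_natCast y 3,
      ← Real.rpow_mul hy]
    norm_num
  have h3 : μ ^ (-(1:ℝ)/3) * |x - t| ^ ((2:ℝ)/3)
      ≤ μ ^ (-(1:ℝ)/3) * (μ ^ ((1:ℝ)/3) * y) := by
    rw [← h2]
    exact mul_le_mul_of_nonneg_left h1 (cpos hμ).le
  refine le_trans h3 ?_
  rw [← mul_assoc, ← Real.rpow_add hμ]
  norm_num

include hK hne hμ in
lemma graph_backward {x y : ℝ}
    (h : (⨅ s : K, μ ^ (-(1:ℝ)/3) * ((x - (s:ℝ)) ^ 2) ^ ((1:ℝ)/3)) ≤ y) :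
    ∃ t ∈ K, (x - t) ^ 2 ≤ μ * y ^ 3 := by
  have hy : 0 ≤ y := le_trans (F_nonneg (cpos hμ) x) h
  obtain ⟨t₀, ht₀, _, hFx⟩ := F_min hK hne (cpos hμ) x
  refine ⟨t₀, ht₀, ?_⟩
  rw [hFx] at h
  have key : |x - t₀| ^ ((2:ℝ)/3) ≤ μ ^ ((1:ℝ)/3) * y := by
    have h5 := mul_le_mul_of_nonneg_left h (Real.rpow_pos_of_pos hμ ((1:ℝ)/3)).le
    rwa [← mul_assoc, ← Real.rpow_add hμ, show (1:ℝ)/3 + -(1:ℝ)/3 = 0 by ring,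
      Real.rpow_zero, one_mul] at h5
  have hcube := pow_le_pow_left₀ (Real.rpow_nonneg (abs_nonneg _) _) key 3
  have e1 : (|x - t₀| ^ ((2:ℝ)/3)) ^ (3:ℕ) = (x - t₀) ^ 2 := by
    rw [← Real.rpow_natCast (|x - t₀| ^ ((2:ℝ)/3)) 3, ← Real.rpow_mul (abs_nonneg _),
      ← sq_abs, ← Real.rpow_natCast |x - t₀| 2]
    norm_num
  have e2 : (μ ^ ((1:ℝ)/3) * y) ^ (3:ℕ) = μ * y ^ 3 := by
    rw [mul_pow, ← Real.rpow_natCast (μ ^ ((1:ℝ)/3)) 3, ← Real.rpow_mul hμ.le]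
    norm_num
  rw [e1, e2] at hcube
  exact hcube

end Generic

/-! ### distance bounds on the fat Cantor set -/

lemma dist_to_K (n : ℕ) : ∀ t ∈ KK, dd n / 4 ≤ |mm n - t| := by
  intro t ht
  have hnot : t ∉ Ioo (aa n) (bb n) := fun h => ht.2 (mem_iUnion.2 ⟨n, h⟩)
  have hd := dd_pos n
  by_cases h : t ≤ aa n
  · refine le_abs.2 (Or.inl ?_)
    have : mm n - aa n = dd n / 4 := by unfold mm aa; ring
    linarith
  · push_neg at h
    have hbt : bb n ≤ t := by
      by_contra hbt
      push_neg at hbt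
      exact hnot ⟨h, hbt⟩
    refine le_abs.2 (Or.inr ?_)
    have : bb n - mm n = dd n / 4 := by unfold bb mm; ring
    linarith

end FatCantorNonBV
end FatCantorConstruction

open FatCantorNonBV in
/-- There is a compact set `K ⊆ [0,1]` of positive Lebesgue measure (a fat Cantor set)
such that for every `μ > 0` the function `f(x) = ⨅_{t ∈ K} μ^{-1/3} ((x-t)²)^{1/3}` is
nonnegative, `2/3`-Hölder with constant `μ^{-1/3}`, its upper graph is the set
`W_μ = {(x,y) : ∃ t ∈ K, (x-t)² ≤ μ y³}`, and `f` fails to have locally bounded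
variation. -/
theorem exists_fatCantor_nonBV_inf_function :
    ∃ K : Set ℝ, IsCompact K ∧ K ⊆ Icc 0 1 ∧ 0 < volume K ∧
      ∀ μ : ℝ, 0 < μ → ∀ f : ℝ → ℝ,
        (∀ x : ℝ, f x = ⨅ t : K, μ ^ (-(1 : ℝ) / 3) * ((x - (t : ℝ)) ^ 2) ^ ((1 : ℝ) / 3)) →
        (∀ x : ℝ, 0 ≤ f x) ∧
        (∀ x y : ℝ, |f x - f y| ≤ μ ^ (-(1 : ℝ) / 3) * |x - y| ^ ((2 : ℝ) / 3)) ∧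
        ({p : ℝ × ℝ | ∃ t ∈ K, (p.1 - t) ^ 2 ≤ μ * p.2 ^ 3} =
          {p : ℝ × ℝ | f p.1 ≤ p.2}) ∧
        ¬ LocallyBoundedVariationOn f univ := by
  refine ⟨KK, K_compact, K_subset, K_vol_pos, ?_⟩
  intro μ hμ f hf
  have hc : (0:ℝ) < μ ^ (-(1:ℝ)/3) := cpos hμ
  have hnn : ∀ x, 0 ≤ f x := fun x => by rw [hf x]; exact F_nonneg hc x
  refine ⟨hnn, ?_, ?_, ?_⟩
  · -- Hölder
    intro x y
    rw [hf x, hf y]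
    exact F_holder K_compact K_nonempty hc x y
  · -- graph
    ext ⟨x, y⟩
    simp only [mem_setOf_eq]
    constructor
    · rintro ⟨t, ht, hineq⟩
      rw [hf x]
      exact graph_forward K_nonempty hμ ht hineq
    · intro h
      rw [hf x] at h
      exact graph_backward K_compact K_nonempty hμ h
  · -- not locally BV
    intro hBV
    have hf0 : ∀ t ∈ KK, f t = 0 := by
      intro t ht
      refine le_antisymm ?_ (hnn t)
      have := F_le K_nonempty hc t ht
      rw [← hf t] at this
      simpa [Real.zero_rpow (by norm_num : ((2:ℝ)/3) ≠ 0)] using this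
    have hfm : ∀ n, μ ^ (-(1:ℝ)/3) * (dd n / 4) ^ ((2:ℝ)/3) ≤ f (mm n) := by
      intro n
      rw [hf (mm n)]
      exact F_ge K_nonempty hc (mm n) (by linarith [dd_pos n]) (dist_to_K n)
    -- the variation lower bound by induction
    have claim : ∀ N : ℕ,
        ENNReal.ofReal (∑ n ∈ Finset.range N,
          2 * (μ ^ (-(1:ℝ)/3) * (dd n / 4) ^ ((2:ℝ)/3)))
          ≤ eVariationOn f (univ ∩ Icc (q N) (q 0)) := by
      intro N
      induction N with
      | zero => simp
      | succ N ih =>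
        have hm1 : q (N + 1) ≤ mm N := le_trans (q_lt_aa N).le (aa_lt_mm N).le
        have hm2 : mm N ≤ q N := le_trans (mm_lt_bb N).le (bb_lt_q N).le
        have hsplit : eVariationOn f (univ ∩ Icc (q (N+1)) (q N))
            + eVariationOn f (univ ∩ Icc (q N) (q 0))
            = eVariationOn f (univ ∩ Icc (q (N+1)) (q 0)) :=
          eVariationOn.Icc_add_Icc f (q_anti (Nat.le_succ N)) (q_anti (Nat.zero_le N))
            (mem_univ _)
        have hsplit2 : eVariationOn f (univ ∩ Icc (q (N+1)) (mm N))
            + eVariationOn f (univ ∩ Icc (mm N) (q N))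
            = eVariationOn f (univ ∩ Icc (q (N+1)) (q N)) :=
          eVariationOn.Icc_add_Icc f hm1 hm2 (mem_univ _)
        have hterm_nn : (0:ℝ) ≤ μ ^ (-(1:ℝ)/3) * (dd N / 4) ^ ((2:ℝ)/3) :=
          mul_nonneg hc.le (Real.rpow_nonneg (by linarith [dd_pos N]) _)
        have e1 : ENNReal.ofReal (μ ^ (-(1:ℝ)/3) * (dd N / 4) ^ ((2:ℝ)/3))
            ≤ eVariationOn f (univ ∩ Icc (q (N+1)) (mm N)) := by
          refine le_trans ?_ (eVariationOn.edist_le f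
            (x := aa N) (y := mm N)
            ⟨mem_univ _, (q_lt_aa N).le, (aa_lt_mm N).le⟩
            ⟨mem_univ _, hm1, le_rfl⟩)
          rw [edist_dist, Real.dist_eq, hf0 (aa N) (aa_mem_K N), zero_sub, abs_neg,
            abs_of_nonneg (hnn _)]
          exact ENNReal.ofReal_le_ofReal (hfm N)
        have e2 : ENNReal.ofReal (μ ^ (-(1:ℝ)/3) * (dd N / 4) ^ ((2:ℝ)/3))
            ≤ eVariationOn f (univ ∩ Icc (mm N) (q N)) := by
          refine le_trans ?_ (eVariationOn.edist_le f
            (x := mm N) (y := bb N)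
            ⟨mem_univ _, le_rfl, hm2⟩
            ⟨mem_univ _, (mm_lt_bb N).le, (bb_lt_q N).le⟩)
          rw [edist_dist, Real.dist_eq, hf0 (bb N) (bb_mem_K N), sub_zero,
            abs_of_nonneg (hnn _)]
          exact ENNReal.ofReal_le_ofReal (hfm N)
        rw [Finset.sum_range_succ, ENNReal.ofReal_add
          (Finset.sum_nonneg (fun i _ => by
            have := dd_pos i
            have : (0:ℝ) ≤ μ ^ (-(1:ℝ)/3) * (dd i / 4) ^ ((2:ℝ)/3) :=
              mul_nonneg hc.le (Real.rpow_nonneg (by linarith) _)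
            linarith))
          (by linarith)]
        calc ENNReal.ofReal (∑ n ∈ Finset.range N,
              2 * (μ ^ (-(1:ℝ)/3) * (dd n / 4) ^ ((2:ℝ)/3)))
              + ENNReal.ofReal (2 * (μ ^ (-(1:ℝ)/3) * (dd N / 4) ^ ((2:ℝ)/3)))
            ≤ eVariationOn f (univ ∩ Icc (q N) (q 0))
              + (eVariationOn f (univ ∩ Icc (q (N+1)) (mm N))
                + eVariationOn f (univ ∩ Icc (mm N) (q N))) := by
              refine add_le_add ih ?_
              rw [two_mul, ENNReal.ofReal_add hterm_nn hterm_nn]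
              exact add_le_add e1 e2
          _ = eVariationOn f (univ ∩ Icc (q (N+1)) (q N))
              + eVariationOn f (univ ∩ Icc (q N) (q 0)) := by
              rw [hsplit2, add_comm]
          _ = eVariationOn f (univ ∩ Icc (q (N+1)) (q 0)) := hsplit
    -- finish : bounded partial sums of a divergent series
    have hV : eVariationOn f (univ ∩ Icc (0:ℝ) 1) ≠ ⊤ :=
      hBV 0 1 (mem_univ 0) (mem_univ 1)
    have hmono : ∀ N : ℕ, eVariationOn f (univ ∩ Icc (q N) (q 0))
        ≤ eVariationOn f (univ ∩ Icc (0:ℝ) 1) := fun N =>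
      eVariationOn.mono f (inter_subset_inter_right _
        (Icc_subset_Icc (q_pos N).le (by rw [q_zero])))
    have hbound : ∀ N : ℕ, ∑ n ∈ Finset.range N,
        2 * (μ ^ (-(1:ℝ)/3) * (dd n / 4) ^ ((2:ℝ)/3))
        ≤ (eVariationOn f (univ ∩ Icc (0:ℝ) 1)).toReal := by
      intro N
      have h := le_trans (claim N) (hmono N)
      exact (ENNReal.ofReal_le_iff_le_toReal hV).mp h
    set V := (eVariationOn f (univ ∩ Icc (0:ℝ) 1)).toReal with hVdef
    have hterm : ∀ n : ℕ, μ ^ (-(1:ℝ)/3) / 2 * (1 / ((n:ℝ) + 2))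
        ≤ 2 * (μ ^ (-(1:ℝ)/3) * (dd n / 4) ^ ((2:ℝ)/3)) := by
      intro n
      have h := dd4_rpow_ge n
      have h2 : μ ^ (-(1:ℝ)/3) * (1 / (4 * ((n:ℝ) + 2)))
          ≤ μ ^ (-(1:ℝ)/3) * (dd n / 4) ^ ((2:ℝ)/3) :=
        mul_le_mul_of_nonneg_left h hc.le
      have h3 : μ ^ (-(1:ℝ)/3) / 2 * (1 / ((n:ℝ) + 2))
          = 2 * (μ ^ (-(1:ℝ)/3) * (1 / (4 * ((n:ℝ) + 2)))) := by
        field_simp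
        ring
      rw [h3]
      linarith
    have hsum : ∀ N : ℕ, ∑ n ∈ Finset.range N, 1 / ((n:ℝ) + 2)
        ≤ 2 / μ ^ (-(1:ℝ)/3) * V := by
      intro N
      have h1 : ∑ n ∈ Finset.range N, μ ^ (-(1:ℝ)/3) / 2 * (1 / ((n:ℝ) + 2)) ≤ V :=
        le_trans (Finset.sum_le_sum fun i _ => hterm i) (hbound N)
      rw [← Finset.mul_sum] at h1
      rw [div_mul_eq_mul_div, le_div_iff₀ hc]
      calc (∑ n ∈ Finset.range N, 1 / ((n:ℝ) + 2)) * μ ^ (-(1:ℝ)/3)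
          = 2 * (μ ^ (-(1:ℝ)/3) / 2 * ∑ n ∈ Finset.range N, 1 / ((n:ℝ) + 2)) := by ring
        _ ≤ 2 * V := by linarith
    have hsummable : Summable (fun n : ℕ => 1 / ((n:ℝ) + 2)) :=
      summable_of_sum_range_le (fun n => by positivity) hsum
    have hshift : Summable (fun n : ℕ => 1 / ((↑(n + 2) : ℝ))) := by
      simpa using hsummable
    exact Real.not_summable_one_div_natCast ((summable_nat_add_iff 2).mp hshift)
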